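/- arXiv:1202.4370 — 2 statements merged into one kernel-verified Lean document; each statement's English description precedes it below -/
import Mathlib

section
/- Let k be an algebraically closed field, R = k[x_0,...,x_N], and let I be a homogeneous ideal with (0) ≠ I ⊊ R. Suppose there are positive integers c and b such that I^(cm) = (I^(c))^m for all m ≥ 1 and I^(c) ⊆ I^b. Then for all positive integers m and r with r ≤ mb/c − b, one has I^(m) ⊆ I^r. -/
open MvPolynomial Filter

/-- A homogeneous ideal of the polynomial ring: an ideal closed under taking
homogeneous components. -/
def IsHomogIdeal {k : Type*} [CommSemiring k] {σ : Type*} (I : Ideal (MvPolynomial σ k)) : Prop :=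
  ∀ f ∈ I, ∀ d : ℕ, MvPolynomial.homogeneousComponent d f ∈ I

/-- `α(I)`: the least degree of a nonzero element of `I`. -/
noncomputable def alphaDeg {k : Type*} [CommSemiring k] {σ : Type*}
    (I : Ideal (MvPolynomial σ k)) : ℕ :=
  sInf {d | ∃ f ∈ I, f ≠ 0 ∧ f.totalDegree = d}

/-- The `m`-th symbolic power of `I`: the intersection, over the associated primes `P`
of `I` (i.e. of `R ⧸ I`), of the contractions `I^m R_P ∩ R`. -/
noncomputable def symbolicPower {R : Type*} [CommRing R] (I : Ideal R) (m : ℕ) : Ideal R :=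
  ⨅ P : {P : Ideal R // P ∈ associatedPrimes R (R ⧸ I)},
    letI : P.1.IsPrime := IsAssociatedPrime.isPrime P.2
    (Ideal.map (algebraMap R (Localization.AtPrime P.1)) (I ^ m)).comap
      (algebraMap R (Localization.AtPrime P.1))

/-- The resurgence `ρ(I) = sup {m/r : sp m ⊄ I^r}`, stated relative to a given
symbolic power function `sp`. -/
noncomputable def resurgence {R : Type*} [CommRing R] (I : Ideal R) (sp : ℕ → Ideal R) : ℝ :=
  sSup {x : ℝ | ∃ m r : ℕ, 0 < m ∧ 0 < r ∧ ¬ sp m ≤ I ^ r ∧ x = (m : ℝ) / r}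

/-- The asymptotic resurgence `ρ_a(I) = sup {m/r : sp (mt) ⊄ I^{rt} for all t ≫ 0}`. -/
noncomputable def asymResurgence {R : Type*} [CommRing R] (I : Ideal R) (sp : ℕ → Ideal R) : ℝ :=
  sSup {x : ℝ | ∃ m r : ℕ, 0 < m ∧ 0 < r ∧
    (∀ᶠ t : ℕ in atTop, ¬ sp (m * t) ≤ I ^ (r * t)) ∧ x = (m : ℝ) / r}

/-- `ρ(I,t) = sup {m/r : sp m ⊄ I^r, m ≥ t, r ≥ t}`. -/
noncomputable def resurgenceFrom {R : Type*} [CommRing R] (I : Ideal R) (sp : ℕ → Ideal R)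
    (t : ℕ) : ℝ :=
  sSup {x : ℝ | ∃ m r : ℕ, 0 < m ∧ 0 < r ∧ t ≤ m ∧ t ≤ r ∧ ¬ sp m ≤ I ^ r ∧ x = (m : ℝ) / r}

/-- `ρ'_a(I) = limsup_{t → ∞} ρ(I,t)`. -/
noncomputable def asymResurgence' {R : Type*} [CommRing R] (I : Ideal R) (sp : ℕ → Ideal R) : ℝ :=
  Filter.limsup (resurgenceFrom I sp) Filter.atTop


lemma symbolicPower_anti {R : Type*} [CommRing R] (I : Ideal R) {n m : ℕ} (h : n ≤ m) :
    symbolicPower I m ≤ symbolicPower I n := by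
  unfold symbolicPower
  exact iInf_mono fun P => Ideal.comap_mono (Ideal.map_mono (Ideal.pow_le_pow_right h))

/-- If `I^(cm) = (I^(c))^m` for all `m ≥ 1` and `I^(c) ⊆ I^b` for positive integers `c, b`,
then `I^(m) ⊆ I^r` for all positive integers `m, r` with `r ≤ mb/c − b`. -/
theorem statement3 {k : Type*} [Field k] [IsAlgClosed k] {N : ℕ}
    (I : Ideal (MvPolynomial (Fin (N + 1)) k))
    (hI0 : I ≠ ⊥) (hI1 : I ≠ ⊤) (hhom : IsHomogIdeal I)
    (c b : ℕ) (hc : 0 < c) (hb : 0 < b)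
    (hpow : ∀ m : ℕ, 1 ≤ m → symbolicPower I (c * m) = (symbolicPower I c) ^ m)
    (hcb : symbolicPower I c ≤ I ^ b) :
    ∀ m r : ℕ, 0 < m → 0 < r → (r : ℝ) ≤ (m : ℝ) * b / c - b →
      symbolicPower I m ≤ I ^ r := by
  intro m r hm hr hreal
  have hct : c * (m / c) ≤ m := Nat.mul_div_le m c
  have hmct : m ≤ c * (m / c) + c := by
    have h1 := Nat.div_add_mod m c
    have h2 := Nat.mod_lt m hc
    omega
  have hcR : (0:ℝ) < c := by exact_mod_cast hc
  have hbR : (0:ℝ) < b := by exact_mod_cast hb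
  have ht1 : 1 ≤ m / c := by
    by_contra h
    have hmc : m < c := (Nat.div_eq_zero_iff.mp (Nat.lt_one_iff.mp (not_le.mp h))).resolve_left hc.ne'
    have hmcR : (m : ℝ) < c := by exact_mod_cast hmc
    have hneg : (m : ℝ) * b / c - b < 0 := by
      rw [sub_neg, div_lt_iff₀ hcR]
      nlinarith
    have h1 : (r : ℝ) < 0 := lt_of_le_of_lt hreal hneg
    exact absurd h1 (Nat.cast_nonneg r : (0:ℝ) ≤ r).not_gt
  have hrbt : r ≤ b * (m / c) := by
    have h0 : ((r:ℝ) + b) * c ≤ m * b := by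
      rw [← le_div_iff₀ hcR]; linarith
    have hmctR : (m : ℝ) ≤ c * (m / c : ℕ) + c := by exact_mod_cast hmct
    have h2 : (r : ℝ) * c ≤ ((b : ℝ) * (m / c : ℕ)) * c := by nlinarith
    have h3 : (r : ℝ) ≤ (b : ℝ) * (m / c : ℕ) := le_of_mul_le_mul_right h2 hcR
    exact_mod_cast h3
  calc symbolicPower I m ≤ symbolicPower I (c * (m / c)) := symbolicPower_anti I hct
    _ = (symbolicPower I c) ^ (m / c) := hpow _ ht1
    _ ≤ (I ^ b) ^ (m / c) := Ideal.pow_right_mono hcb _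
    _ = I ^ (b * (m / c)) := by rw [← pow_mul]
    _ ≤ I ^ r := Ideal.pow_le_pow_right hrbt
end

section
/- Let k be a field and R = k[x_0,...,x_N]. Let V be a nonempty subset of the variables {x_0,...,x_N}, let V_1,...,V_r be a partition of V into nonempty pairwise disjoint subsets, and let I_j be the ideal of R generated by V_j. Then for any nonnegative integers m_1,...,m_r, not all zero, one has I_1^{m_1}···I_r^{m_r} = ⋂_{j=1}^r I_j^{m_j}. -/
open MvPolynomial Filter

section Aux

open Classical in
/-- Degree of an exponent vector counted only on variables in `S`. -/
noncomputable def wdeg {N : ℕ} (S : Set (Fin (N + 1))) (d : Fin (N + 1) →₀ ℕ) : ℕ :=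
  ∑ i, if i ∈ S then d i else 0

lemma wdeg_add {N : ℕ} (S : Set (Fin (N + 1))) (a b : Fin (N + 1) →₀ ℕ) :
    wdeg S (a + b) = wdeg S a + wdeg S b := by
  classical
  simp only [wdeg, Finsupp.add_apply]
  rw [← Finset.sum_add_distrib]
  apply Finset.sum_congr rfl
  intro i _
  split <;> simp

/-- The ideal of polynomials all of whose monomials have `wdeg S ≥ m`. -/
noncomputable def Jid (k : Type*) [CommSemiring k] {N : ℕ} (S : Set (Fin (N + 1))) (m : ℕ) :
    Ideal (MvPolynomial (Fin (N + 1)) k) where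
  carrier := {f | ∀ d ∈ f.support, m ≤ wdeg S d}
  zero_mem' := by simp
  add_mem' := by
    intro f g hf hg d hd
    rcases Finset.mem_union.1 (MvPolynomial.support_add hd) with h | h
    · exact hf d h
    · exact hg d h
  smul_mem' := by
    intro c f hf d hd
    rw [smul_eq_mul] at hd
    rcases Finset.mem_add.1 (MvPolynomial.support_mul c f hd) with ⟨a, ha, b, hb, rfl⟩
    calc m ≤ wdeg S b := hf b hb
    _ ≤ wdeg S (a + b) := by rw [wdeg_add]; omega

lemma mem_Jid {k : Type*} [CommSemiring k] {N : ℕ} {S : Set (Fin (N + 1))} {m : ℕ}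
    {f : MvPolynomial (Fin (N + 1)) k} :
    f ∈ Jid k S m ↔ ∀ d ∈ f.support, m ≤ wdeg S d := Iff.rfl

lemma Jid_mul_le {k : Type*} [CommSemiring k] {N : ℕ} (S : Set (Fin (N + 1))) (a b : ℕ) :
    Jid k S a * Jid k S b ≤ Jid k S (a + b) := by
  rw [Ideal.mul_le]
  intro f hf g hg d hd
  rcases Finset.mem_add.1 (MvPolynomial.support_mul f g hd) with ⟨u, hu, v, hv, rfl⟩
  rw [wdeg_add]
  exact Nat.add_le_add (hf u hu) (hg v hv)

lemma wdeg_single {N : ℕ} {S : Set (Fin (N + 1))} {i : Fin (N + 1)} (hi : i ∈ S) :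
    wdeg S (Finsupp.single i 1) = 1 := by
  classical
  rw [wdeg, Finset.sum_eq_single i]
  · simp [hi]
  · intro j _ hj
    simp [Finsupp.single_apply, Ne.symm hj]
  · simp

lemma span_le_Jid {k : Type*} [CommSemiring k] {N : ℕ} (S : Set (Fin (N + 1))) :
    Ideal.span (MvPolynomial.X '' S : Set (MvPolynomial (Fin (N + 1)) k)) ≤ Jid k S 1 := by
  rw [Ideal.span_le]
  rintro _ ⟨i, hi, rfl⟩
  intro d hd
  rw [MvPolynomial.X] at hd
  have hd' := MvPolynomial.support_monomial_subset hd
  rw [Finset.mem_singleton] at hd'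
  subst hd'
  rw [wdeg_single hi]

lemma pow_le_Jid {k : Type*} [CommSemiring k] {N : ℕ} (S : Set (Fin (N + 1))) (m : ℕ) :
    (Ideal.span (MvPolynomial.X '' S : Set (MvPolynomial (Fin (N + 1)) k))) ^ m ≤ Jid k S m := by
  induction m with
  | zero => intro f _; intro d _; exact Nat.zero_le _
  | succ n ih =>
      rw [pow_succ]
      calc _ ≤ Jid k S n * Jid k S 1 := Ideal.mul_mono ih (span_le_Jid S)
      _ ≤ Jid k S (n + 1) := Jid_mul_le S n 1

lemma monomial_mem_pow {k : Type*} [CommSemiring k] {N : ℕ} (S : Set (Fin (N + 1))) (m : ℕ)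
    (e : Fin (N + 1) →₀ ℕ) (hsupp : ∀ i ∈ e.support, i ∈ S) (hdeg : m ≤ wdeg S e) :
    MvPolynomial.monomial e (1 : k) ∈
      (Ideal.span (MvPolynomial.X '' S : Set (MvPolynomial (Fin (N + 1)) k))) ^ m := by
  classical
  induction m generalizing e with
  | zero => simp
  | succ n ih =>
      have hpos : 0 < wdeg S e := lt_of_lt_of_le (Nat.succ_pos n) hdeg
      have : ∃ i, (if i ∈ S then e i else 0) ≠ 0 := by
        by_contra h
        push_neg at h
        have : wdeg S e = 0 := Finset.sum_eq_zero fun i _ => h i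
        omega
      obtain ⟨i, hi⟩ := this
      have hiS : i ∈ S := by by_contra h; simp [h] at hi
      have hie : 1 ≤ e i := by by_cases h : i ∈ S <;> simp [h] at hi <;> omega
      have hle : Finsupp.single i 1 ≤ e := by
        intro j
        rcases eq_or_ne j i with rfl | hj
        · simpa using hie
        · simp [Finsupp.single_apply, Ne.symm hj]
      have hsum : Finsupp.single i 1 + (e - Finsupp.single i 1) = e := by
        rw [add_tsub_cancel_of_le hle]
      have hrest_supp : ∀ j ∈ (e - Finsupp.single i 1).support, j ∈ S := by
        intro j hj
        apply hsupp
        rw [Finsupp.mem_support_iff] at hj ⊢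
        intro h0
        apply hj
        rw [Finsupp.tsub_apply, h0] at hj
        simp at hj
      have hrest_deg : n ≤ wdeg S (e - Finsupp.single i 1) := by
        have := wdeg_add S (Finsupp.single i 1) (e - Finsupp.single i 1)
        rw [hsum, wdeg_single hiS] at this
        omega
      have key : MvPolynomial.monomial e (1 : k) =
          MvPolynomial.X i * MvPolynomial.monomial (e - Finsupp.single i 1) 1 := by
        rw [MvPolynomial.X, MvPolynomial.monomial_mul, mul_one, hsum]
      rw [key, pow_succ']
      exact Ideal.mul_mem_mul (Ideal.subset_span ⟨i, hiS, rfl⟩)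
        (ih _ hrest_supp hrest_deg)

lemma prod_monomial {k : Type*} [CommSemiring k] {N : ℕ} {ι : Type*} (s : Finset ι)
    (e : ι → (Fin (N + 1) →₀ ℕ)) :
    (∏ j ∈ s, MvPolynomial.monomial (e j) (1 : k)) =
      MvPolynomial.monomial (∑ j ∈ s, e j) 1 := by
  classical
  induction s using Finset.induction with
  | empty => simp
  | insert _ _ hx ih =>
      rw [Finset.prod_insert hx, Finset.sum_insert hx, ih, MvPolynomial.monomial_mul, mul_one]

end Aux

/-- Lemma: let `V` be a nonempty set of the variables of `k[x_0,…,x_N]`, partitioned into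
nonempty pairwise disjoint subsets `V_1,…,V_r`, and let `I_j` be the ideal generated by
`V_j`.  Then for nonnegative integers `m_1,…,m_r`, not all zero,
`I_1^{m_1} ⋯ I_r^{m_r} = ⋂_j I_j^{m_j}`. -/
theorem statement14 {k : Type*} [Field k] {N r : ℕ}
    (V : Set (Fin (N + 1))) (hV : V.Nonempty)
    (Vs : Fin r → Set (Fin (N + 1)))
    (hne : ∀ j, (Vs j).Nonempty)
    (hdisj : ∀ i j, i ≠ j → Disjoint (Vs i) (Vs j))
    (hcover : (⋃ j, Vs j) = V)
    (Idl : Fin r → Ideal (MvPolynomial (Fin (N + 1)) k))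
    (hIdl : ∀ j, Idl j = Ideal.span (MvPolynomial.X '' Vs j))
    (m : Fin r → ℕ) (hm : ∃ j, m j ≠ 0) :
    ∏ j, Idl j ^ m j = ⨅ j, Idl j ^ m j := by
  classical
  apply le_antisymm
  · exact le_iInf fun i => le_trans Ideal.prod_le_inf (Finset.inf_le (Finset.mem_univ i))
  · intro f hf
    simp only [Ideal.mem_iInf] at hf
    have hw : ∀ j, ∀ d ∈ f.support, m j ≤ wdeg (Vs j) d := by
      intro j d hd
      have : f ∈ Jid k (Vs j) (m j) := by
        apply pow_le_Jid (Vs j) (m j)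
        rw [← hIdl j]; exact hf j
      exact this d hd
    rw [f.as_sum]
    apply Ideal.sum_mem
    intro d hd
    -- e j is the restriction of d to the variables in Vs j
    set e : Fin r → (Fin (N + 1) →₀ ℕ) := fun j => d.filter (· ∈ Vs j) with he
    have he_apply : ∀ j i, e j i = if i ∈ Vs j then d i else 0 := by
      intro j i; simp [he, Finsupp.filter_apply]
    have hsle : (∑ j, e j) ≤ d := by
      intro i
      rw [Finsupp.finset_sum_apply]
      by_cases hex : ∃ j0, i ∈ Vs j0
      · obtain ⟨j0, hj0⟩ := hex
        rw [Finset.sum_eq_single j0]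
        · rw [he_apply, if_pos hj0]
        · intro j _ hj
          rw [he_apply, if_neg]
          exact fun hmem => (hdisj j j0 hj).le_bot ⟨hmem, hj0⟩
        · simp
      · push_neg at hex
        rw [Finset.sum_eq_zero fun j _ => by rw [he_apply, if_neg (hex j)]]
        exact Nat.zero_le _
    have hwdeg_e : ∀ j, wdeg (Vs j) (e j) = wdeg (Vs j) d := by
      intro j
      unfold wdeg
      apply Finset.sum_congr rfl
      intro i _
      split <;> rename_i h <;> simp [he_apply, h]
    have hsupp_e : ∀ j, ∀ i ∈ (e j).support, i ∈ Vs j := by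
      intro j i hi
      rw [Finsupp.mem_support_iff] at hi
      by_contra h
      rw [he_apply, if_neg h] at hi
      exact hi rfl
    have hmem : (∏ j, MvPolynomial.monomial (e j) (1 : k)) ∈ ∏ j, Idl j ^ m j := by
      apply Ideal.prod_mem_prod
      intro j _
      rw [hIdl j]
      exact monomial_mem_pow (Vs j) (m j) (e j) (hsupp_e j)
        (by rw [hwdeg_e j]; exact hw j d hd)
    have key : MvPolynomial.monomial d (MvPolynomial.coeff d f) =
        MvPolynomial.monomial (d - ∑ j, e j) (MvPolynomial.coeff d f) *
          ∏ j, MvPolynomial.monomial (e j) (1 : k) := by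
      rw [prod_monomial, MvPolynomial.monomial_mul, mul_one, tsub_add_cancel_of_le hsle]
    rw [key]
    exact Ideal.mul_mem_left _ _ hmem
end
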